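/- Let F be a real Banach space, v ∈ F with ‖v‖ = 1, and k ≥ 2. Define Φ : ℓ∞ → P(^kℓ₁,F) by Φ(ξ)(x) = (∑_{i=1}^∞ ξ_i x_i^k) v for ξ = (ξ_i) ∈ ℓ∞ and x = (x_i) ∈ ℓ₁. Then Φ(ξ) ∈ P_wb(^kℓ₁,F) if and only if ξ ∈ c₀, i.e., if and only if lim_{i→∞} ξ_i = 0. -/

import Mathlib

noncomputable section

open Metric Filter Topology
open scoped ENNReal NNReal

namespace PPV

/-- The closed unit ball of `E`, as a set. -/
abbrev Ball (E : Type*) [NormedAddCommGroup E] : Set E := Metric.closedBall (0 : E) 1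

/-- A continuous multilinear map is symmetric. -/
def IsSymm {E F : Type*} [NormedAddCommGroup E] [NormedSpace ℝ E]
    [NormedAddCommGroup F] [NormedSpace ℝ F] {k : ℕ}
    (A : ContinuousMultilinearMap ℝ (fun _ : Fin k => E) F) : Prop :=
  ∀ (σ : Equiv.Perm (Fin k)) (v : Fin k → E), (A fun i => v (σ i)) = A v

/-- `A` is the (symmetric) continuous multilinear map associated to the continuous
`k`-homogeneous polynomial represented by `f`, a bounded continuous function on the
closed unit ball of `E` (a continuous `k`-homogeneous polynomial is determined by
its restriction to the unit ball, and its norm is the sup norm there). -/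
def Represents {E F : Type*} [NormedAddCommGroup E] [NormedSpace ℝ E]
    [NormedAddCommGroup F] [NormedSpace ℝ F] {k : ℕ}
    (A : ContinuousMultilinearMap ℝ (fun _ : Fin k => E) F)
    (f : BoundedContinuousFunction (Ball E) F) : Prop :=
  IsSymm A ∧ ∀ y : Ball E, f y = A fun _ => (y : E)

/-- The space `P(^kE,F)` of continuous `k`-homogeneous polynomials from `E` to `F`,
realized (isometrically, via restriction to the unit ball) as a submodule of the space
of bounded continuous functions on the closed unit ball of `E`; the induced norm is
`‖P‖ = sup_{‖x‖ ≤ 1} ‖P x‖`. -/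
def polySet (k : ℕ) (E F : Type*) [NormedAddCommGroup E] [NormedSpace ℝ E]
    [NormedAddCommGroup F] [NormedSpace ℝ F] :
    Submodule ℝ (BoundedContinuousFunction (Ball E) F) where
  carrier := {f | ∃ A : ContinuousMultilinearMap ℝ (fun _ : Fin k => E) F, Represents A f}
  add_mem' := by
    rintro f g ⟨A, hA, hAf⟩ ⟨B, hB, hBf⟩
    exact ⟨A + B, fun σ v => by simp [hA σ v, hB σ v], fun y => by simp [hAf y, hBf y]⟩
  zero_mem' := ⟨0, fun σ v => rfl, fun y => by simp⟩
  smul_mem' := by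
    rintro c f ⟨A, hA, hAf⟩
    exact ⟨c • A, fun σ v => by simp [hA σ v], fun y => by simp [hAf y]⟩

/-- A map `P : E → F` is continuous from the weak topology of `E` to the norm topology
of `F` on bounded subsets of `E`. -/
def WeakContOnBounded (E F : Type*) [NormedAddCommGroup E] [NormedSpace ℝ E]
    [NormedAddCommGroup F] [NormedSpace ℝ F] (P : E → F) : Prop :=
  ∀ S : Set E, Bornology.IsBounded S →
    ContinuousOn (fun x : WeakSpace ℝ E => P ((toWeakSpace ℝ E).symm x))
      (toWeakSpace ℝ E '' S)

/-- The subspace `P_wb(^kE,F)` of `P(^kE,F)` consisting of the polynomials which are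
weak-to-norm continuous on bounded sets. -/
def polyWbSet (k : ℕ) (E F : Type*) [NormedAddCommGroup E] [NormedSpace ℝ E]
    [NormedAddCommGroup F] [NormedSpace ℝ F] :
    Submodule ℝ (BoundedContinuousFunction (Ball E) F) where
  carrier := {f | ∃ A : ContinuousMultilinearMap ℝ (fun _ : Fin k => E) F,
    Represents A f ∧ WeakContOnBounded E F (fun x => A fun _ => x)}
  add_mem' := by
    rintro f g ⟨A, ⟨hA, hAf⟩, hAw⟩ ⟨B, ⟨hB, hBf⟩, hBw⟩
    refine ⟨A + B, ⟨fun σ v => by simp [hA σ v, hB σ v], fun y => by simp [hAf y, hBf y]⟩,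
      fun S hS => ?_⟩
    have := (hAw S hS).add (hBw S hS)
    simpa [Pi.add_def] using this
  zero_mem' := ⟨0, ⟨fun σ v => rfl, fun y => by simp⟩, fun S hS => by
    simpa using continuousOn_const (c := (0 : F))⟩
  smul_mem' := by
    rintro c f ⟨A, ⟨hA, hAf⟩, hAw⟩
    refine ⟨c • A, ⟨fun σ v => by simp [hA σ v], fun y => by simp [hAf y]⟩, fun S hS => ?_⟩
    have := (hAw S hS).const_smul c
    simpa [Pi.smul_def] using this

/-- A Banach space `Y` contains a copy of a Banach space `X`: there is a linear
homeomorphic embedding of `X` into `Y`. -/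
def ContainsCopy (X Y : Type*) [NormedAddCommGroup X] [NormedSpace ℝ X]
    [NormedAddCommGroup Y] [NormedSpace ℝ Y] : Prop :=
  ∃ f : X →L[ℝ] Y, ∃ c : ℝ, 0 < c ∧ ∀ x, c * ‖x‖ ≤ ‖f x‖

/-- A Banach space `Y` contains a complemented copy of a Banach space `X`: there is a
linear homeomorphic embedding of `X` into `Y` whose image is the range of a bounded
linear projection on `Y`. -/
def ContainsComplCopy (X Y : Type*) [NormedAddCommGroup X] [NormedSpace ℝ X]
    [NormedAddCommGroup Y] [NormedSpace ℝ Y] : Prop :=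
  ∃ f : X →L[ℝ] Y, (∃ c : ℝ, 0 < c ∧ ∀ x, c * ‖x‖ ≤ ‖f x‖) ∧
    ∃ π : Y →L[ℝ] Y, (∀ y, π y ∈ Set.range f) ∧ ∀ y ∈ Set.range f, π y = y

/-- The Banach space `ℓ∞` of bounded real sequences with the sup norm. -/
abbrev Linf : Type := lp (fun _ : ℕ => ℝ) ⊤

/-- The Banach space `ℓ₁` of absolutely summable real sequences. -/
abbrev LOne : Type := lp (fun _ : ℕ => ℝ) 1

/-- `c₀`, the subspace of `ℓ∞` of sequences converging to `0`. -/
def c0Set : Submodule ℝ Linf where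
  carrier := {ξ | Tendsto (fun n => ξ n) atTop (nhds (0 : ℝ))}
  add_mem' := by
    intro f g hf hg
    have h0 := hf.add hg
    rw [add_zero] at h0
    show Tendsto (fun n => (f + g) n) atTop (nhds (0 : ℝ))
    refine h0.congr fun n => ?_
    simp [lp.coeFn_add]
  zero_mem' := by
    show Tendsto (fun n => (0 : Linf) n) atTop (nhds (0 : ℝ))
    have h0 : Tendsto (fun _ : ℕ => (0 : ℝ)) atTop (nhds (0 : ℝ)) := tendsto_const_nhds
    refine h0.congr fun n => ?_
    simp [lp.coeFn_zero]
  smul_mem' := by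
    intro c f hf
    have h0 := hf.const_mul c
    rw [mul_zero] at h0
    show Tendsto (fun n => (c • f) n) atTop (nhds (0 : ℝ))
    refine h0.congr fun n => ?_
    simp [lp.coeFn_smul]

/-- A series `∑ xₙ` in a Banach space is weakly unconditionally Cauchy. -/
def WuC {X : Type*} [NormedAddCommGroup X] [NormedSpace ℝ X] (x : ℕ → X) : Prop :=
  ∀ φ : X →L[ℝ] ℝ, Summable fun n => |φ (x n)|

/-- A subset of `F` is relatively weakly compact: its closure in the weak topology
is weakly compact. -/
def RelWeaklyCompact {F : Type*} [NormedAddCommGroup F] [NormedSpace ℝ F] (s : Set F) : Prop :=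
  IsCompact (closure (toWeakSpace ℝ F '' s))

/-- A (not necessarily linear) map `P : E → F` is unconditionally converging if, for each
w.u.C. series `∑ xₙ` in `E`, the sequence `(P (∑_{i<n} x i))ₙ` converges in `F`. -/
def UncondConv {E F : Type*} [NormedAddCommGroup E] [NormedSpace ℝ E]
    [NormedAddCommGroup F] [NormedSpace ℝ F] (P : E → F) : Prop :=
  ∀ x : ℕ → E, WuC x → ∃ y : F, Tendsto (fun n => P (∑ i ∈ Finset.range n, x i)) atTop (nhds y)

/-- A Banach space `E` has Pełczyński's property (V) if every unconditionally converging
(bounded linear) operator from `E` into any Banach space is weakly compact. -/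
def PropertyV (E : Type*) [NormedAddCommGroup E] [NormedSpace ℝ E] : Prop :=
  ∀ (F : Type*) [NormedAddCommGroup F] [NormedSpace ℝ F] [CompleteSpace F],
    ∀ T : E →L[ℝ] F, UncondConv (fun x => T x) →
      RelWeaklyCompact ((fun x => T x) '' Metric.closedBall (0 : E) 1)

/-- `E` has an unconditional finite dimensional expansion of the identity: a sequence
`(Aₙ)` of finite-rank bounded operators on `E` with `x = ∑ₙ Aₙ x` unconditionally for
every `x ∈ E` (unconditional convergence of the series is `HasSum`). -/
def HasUFDEI (E : Type*) [NormedAddCommGroup E] [NormedSpace ℝ E] : Prop :=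
  ∃ A : ℕ → E →L[ℝ] E, (∀ n, FiniteDimensional ℝ (LinearMap.range (A n).toLinearMap)) ∧
    ∀ x : E, HasSum (fun n => A n x) x

/-- An operator `C : E → P(^kE,F)` is symmetric: `(C x)^(y₁,…,y_k) = (C y₁)^(x,y₂,…,y_k)`,
where `(C z)^` is the symmetric `k`-linear map associated to `C z`.  (Equivalently:
replacing, in any slot, the argument `z` of the symmetric multilinear map associated to
`C x` by `x` and instead applying the multilinear map associated to `C z` gives the
same value.) -/
def IsSymmOp {E F : Type*} [NormedAddCommGroup E] [NormedSpace ℝ E]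
    [NormedAddCommGroup F] [NormedSpace ℝ F] {k : ℕ}
    (C : E →L[ℝ] polySet k E F) : Prop :=
  ∀ (x z : E) (A B : ContinuousMultilinearMap ℝ (fun _ : Fin k => E) F),
    Represents A (C x : BoundedContinuousFunction (Ball E) F) →
    Represents B (C z : BoundedContinuousFunction (Ball E) F) →
    ∀ (v : Fin k → E) (i : Fin k),
      A (Function.update v i z) = B (Function.update v i x)

/-- `P_wb(^kE,F)` is complemented in `P(^kE,F)`: there is a bounded linear projection
on `P(^kE,F)` whose range is `P_wb(^kE,F)`. -/
def WbComplemented (k : ℕ) (E F : Type*) [NormedAddCommGroup E] [NormedSpace ℝ E]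
    [NormedAddCommGroup F] [NormedSpace ℝ F] : Prop :=
  ∃ π : polySet k E F →L[ℝ] polySet k E F,
    (∀ f : polySet k E F, (π f : BoundedContinuousFunction (Ball E) F) ∈ polyWbSet k E F) ∧
    ∀ f : polySet k E F, (f : BoundedContinuousFunction (Ball E) F) ∈ polyWbSet k E F → π f = f

/-- `ℓ_p` for an extended-real exponent `p`. -/
abbrev Lp' (p : ℝ≥0∞) : Type := lp (fun _ : ℕ => ℝ) p

end PPV

namespace Stmts
open PPV Metric Filter Topology
open scoped ENNReal NNReal

/-- Coordinate functional on ℓ¹. -/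
noncomputable def coordL (i : ℕ) : LOne →L[ℝ] ℝ :=
  LinearMap.mkContinuous
    { toFun := fun x => x i
      map_add' := fun x y => by simp [lp.coeFn_add]
      map_smul' := fun c x => by simp [lp.coeFn_smul] }
    1 (fun x => by show ‖x i‖ ≤ 1 * ‖x‖; simpa using lp.norm_apply_le_norm one_ne_zero x i)

lemma coordL_apply (i : ℕ) (x : LOne) : coordL i x = x i := rfl

lemma abs_apply_le_norm (x : LOne) (i : ℕ) : |x i| ≤ ‖x‖ := by
  simpa using lp.norm_apply_le_norm one_ne_zero x i

lemma linf_abs_apply_le_norm (ξ : Linf) (i : ℕ) : |ξ i| ≤ ‖ξ‖ := by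
  have := lp.norm_apply_le_norm ENNReal.top_ne_zero ξ i
  rwa [Real.norm_eq_abs] at this

lemma lone_summable_abs (x : LOne) : Summable fun i => |x i| := by
  have := (lp.memℓp x).summable (p := 1) (by norm_num)
  simpa using this

lemma lone_norm_eq (x : LOne) : ‖x‖ = ∑' i, |x i| := by
  have := lp.norm_eq_tsum_rpow (p := 1) (by norm_num) x
  simpa using this

lemma summable_term (ξ : Linf) (x : LOne) (k : ℕ) (hk : 1 ≤ k) :
    Summable fun i => ξ i * (x i) ^ k := by
  refine Summable.of_norm ?_
  refine Summable.of_nonneg_of_le (fun i => norm_nonneg _)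
    (fun i => ?_) ((lone_summable_abs x).mul_left (‖ξ‖ * ‖x‖ ^ (k - 1)))
  have h1 : |x i| ^ k ≤ ‖x‖ ^ (k - 1) * |x i| := by
    calc |x i| ^ k = |x i| ^ (k - 1) * |x i| := by
          rw [← pow_succ]; congr 1; omega
    _ ≤ ‖x‖ ^ (k - 1) * |x i| :=
        mul_le_mul_of_nonneg_right (pow_le_pow_left₀ (abs_nonneg _)
          (abs_apply_le_norm x i) _) (abs_nonneg _)
  calc ‖ξ i * x i ^ k‖ = |ξ i| * |x i| ^ k := by
        rw [norm_mul]; simp [abs_pow]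
  _ ≤ ‖ξ‖ * (‖x‖ ^ (k - 1) * |x i|) := by
      refine mul_le_mul (linf_abs_apply_le_norm ξ i) h1 (by positivity) (norm_nonneg _)
  _ = ‖ξ‖ * ‖x‖ ^ (k - 1) * |x i| := by ring

lemma g_smul (ξ : Linf) (k : ℕ) (t : ℝ) (x : LOne) :
    ∑' i, ξ i * ((t • x) i) ^ k = t ^ k * ∑' i, ξ i * (x i) ^ k := by
  rw [← tsum_mul_left]
  congr 1
  funext i
  have : (t • x) i = t * x i := by simp [lp.coeFn_smul]
  rw [this, mul_pow]; ring

lemma P_eq {F : Type*} [NormedAddCommGroup F] [NormedSpace ℝ F]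
    (v : F) (j : ℕ) (ξ : Linf)
    (f : BoundedContinuousFunction (Ball LOne) F)
    (hval : ∀ y : Ball LOne, f y = (∑' i : ℕ, ξ i * ((y : LOne) i) ^ (j + 2)) • v)
    (A : ContinuousMultilinearMap ℝ (fun _ : Fin (j + 2) => LOne) F)
    (hA : Represents A f) (x : LOne) :
    (A fun _ => x) = (∑' i, ξ i * (x i) ^ (j + 2)) • v := by
  set t : ℝ := ‖x‖ + 1 with ht
  have ht0 : 0 < t := by positivity
  set y : LOne := t⁻¹ • x with hy
  have hyx : x = t • y := by rw [hy, smul_inv_smul₀ ht0.ne']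
  have hymem : y ∈ Ball LOne := by
    rw [Metric.mem_closedBall, dist_zero_right, hy, norm_smul]
    rw [Real.norm_eq_abs, abs_inv, abs_of_pos ht0]
    rw [inv_mul_le_iff₀ ht0, mul_one, ht]
    linarith [norm_nonneg x]
  have h1 : (A fun _ => y) = (∑' i, ξ i * (y i) ^ (j + 2)) • v := by
    rw [← (hA.2 ⟨y, hymem⟩), hval ⟨y, hymem⟩]
  have h2 : (A fun _ => x) = t ^ (j + 2) • (A fun _ => y) := by
    have := A.map_smul_univ (fun _ => t) (fun _ => y)
    simp only [Finset.prod_const, Finset.card_univ, Fintype.card_fin] at this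
    rw [hyx]; exact this
  have h3 : ∑' i, ξ i * (x i) ^ (j + 2) = t ^ (j + 2) * ∑' i, ξ i * (y i) ^ (j + 2) := by
    conv_lhs => rw [hyx]
    exact g_smul ξ (j + 2) t y
  rw [h2, h1, smul_smul, h3]

set_option maxHeartbeats 2000000
lemma coord_weak_continuous (i : ℕ) :
    Continuous fun w : WeakSpace ℝ LOne => ((toWeakSpace ℝ LOne).symm w : LOne) i := by
  exact WeakBilin.eval_continuous ((topDualPairing ℝ LOne).flip) (coordL i)

lemma wcb_of_tendsto {F : Type*} [NormedAddCommGroup F] [NormedSpace ℝ F]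
    (v : F) (hv : ‖v‖ = 1) (j : ℕ) (ξ : Linf)
    (hξ : Tendsto (fun i => ξ i) atTop (nhds (0 : ℝ))) :
    WeakContOnBounded LOne F (fun x => (∑' i, ξ i * (x i) ^ (j + 2)) • v) := by
  intro S hS
  obtain ⟨R₀, hR₀⟩ := (Metric.isBounded_iff_subset_closedBall 0).mp hS
  set R : ℝ := max R₀ 1 with hRdef
  have hR1 : (1 : ℝ) ≤ R := le_max_right _ _
  have hR0 : (0 : ℝ) < R := lt_of_lt_of_le one_pos hR1
  have hxR : ∀ x ∈ S, ‖x‖ ≤ R := fun x hx => by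
    have := hR₀ hx
    rw [Metric.mem_closedBall, dist_zero_right] at this
    exact this.trans (le_max_left _ _)
  set G : ℕ → WeakSpace ℝ LOne → F := fun N w =>
    (∑ i ∈ Finset.range N, ξ i * (((toWeakSpace ℝ LOne).symm w : LOne) i) ^ (j + 2)) • v
    with hG
  have hGcont : ∀ N, Continuous (G N) := by
    intro N
    refine Continuous.smul ?_ continuous_const
    refine continuous_finset_sum _ (fun i _ => ?_)
    exact continuous_const.mul ((coord_weak_continuous i).pow _)
  have hunif : TendstoUniformlyOn G
      (fun w => (∑' i, ξ i * (((toWeakSpace ℝ LOne).symm w : LOne) i) ^ (j + 2)) • v)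
      atTop (toWeakSpace ℝ LOne '' S) := by
    rw [Metric.tendstoUniformlyOn_iff]
    intro ε hε
    set ε₁ : ℝ := ε / (R ^ (j + 2) + 1) with hε₁def
    have hε₁ : 0 < ε₁ := by positivity
    obtain ⟨N₀, hN₀⟩ := (Metric.tendsto_atTop.mp hξ) ε₁ hε₁
    filter_upwards [eventually_ge_atTop N₀] with N hN w hw
    obtain ⟨x, hxS, rfl⟩ := hw
    rw [LinearEquiv.symm_apply_apply]
    set h : ℕ → ℝ := fun i => ξ i * (x i) ^ (j + 2) with hh
    have hsum : Summable h := summable_term ξ x (j + 2) (by omega)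
    have habs : Summable fun i => |x i| := lone_summable_abs x
    have htail : ∑' i, h i - ∑ i ∈ Finset.range N, h i = ∑' i, h (i + N) := by
      rw [← Summable.sum_add_tsum_nat_add N hsum]; ring
    have hbound : ∀ i : ℕ, |h (i + N)| ≤ ε₁ * R ^ (j + 1) * |x (i + N)| := by
      intro i
      have hξi : |ξ (i + N)| ≤ ε₁ := by
        have := hN₀ (i + N) (le_trans hN (Nat.le_add_left N i))
        rw [dist_zero_right, Real.norm_eq_abs] at this
        exact this.le
      have hxi : |x (i + N)| ^ (j + 2) ≤ R ^ (j + 1) * |x (i + N)| := by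
        calc |x (i + N)| ^ (j + 2) = |x (i + N)| ^ (j + 1) * |x (i + N)| := by
              rw [← pow_succ]
        _ ≤ R ^ (j + 1) * |x (i + N)| := by
            refine mul_le_mul_of_nonneg_right ?_ (abs_nonneg _)
            exact pow_le_pow_left₀ (abs_nonneg _)
              ((abs_apply_le_norm x _).trans (hxR x hxS)) _
      calc |h (i + N)| = |ξ (i + N)| * |x (i + N)| ^ (j + 2) := by
            rw [hh, abs_mul, abs_pow]
      _ ≤ ε₁ * (R ^ (j + 1) * |x (i + N)|) := by
          refine mul_le_mul hξi hxi (by positivity) hε₁.le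
      _ = ε₁ * R ^ (j + 1) * |x (i + N)| := by ring
    have hsumtail : Summable fun i => h (i + N) := (summable_nat_add_iff N).mpr hsum
    have habstail : Summable fun i => |x (i + N)| := (summable_nat_add_iff N).mpr habs
    have htailbound : |∑' i, h (i + N)| ≤ ε₁ * R ^ (j + 2) := by
      calc |∑' i, h (i + N)| ≤ ∑' i, |h (i + N)| := by
            have hs : Summable fun i => ‖h (i + N)‖ := by
              simpa [Real.norm_eq_abs] using hsumtail.abs
            simpa [Real.norm_eq_abs] using norm_tsum_le_tsum_norm hs
      _ ≤ ∑' i, ε₁ * R ^ (j + 1) * |x (i + N)| :=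
          Summable.tsum_le_tsum hbound hsumtail.abs (habstail.mul_left _)
      _ = ε₁ * R ^ (j + 1) * ∑' i, |x (i + N)| := tsum_mul_left
      _ ≤ ε₁ * R ^ (j + 1) * ∑' i, |x i| := by
          refine mul_le_mul_of_nonneg_left ?_ (by positivity)
          have := Summable.sum_add_tsum_nat_add N habs
          have hpos : 0 ≤ ∑ i ∈ Finset.range N, |x i| :=
            Finset.sum_nonneg fun _ _ => abs_nonneg _
          linarith
      _ = ε₁ * R ^ (j + 1) * ‖x‖ := by rw [lone_norm_eq]
      _ ≤ ε₁ * R ^ (j + 1) * R := by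
          exact mul_le_mul_of_nonneg_left (hxR x hxS) (by positivity)
      _ = ε₁ * R ^ (j + 2) := by ring
    have hlt : ε₁ * R ^ (j + 2) < ε := by
      rw [hε₁def, div_mul_eq_mul_div, div_lt_iff₀ (by positivity)]
      nlinarith [pow_pos hR0 (j + 2)]
    rw [dist_eq_norm, ← sub_smul, norm_smul, hv, mul_one, Real.norm_eq_abs]
    calc |∑' i, h i - ∑ i ∈ Finset.range N, h i| = |∑' i, h (i + N)| := by rw [htail]
    _ ≤ ε₁ * R ^ (j + 2) := htailbound
    _ < ε := hlt
  exact hunif.continuousOn (Filter.Eventually.of_forall fun N => (hGcont N).continuousOn).frequently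

noncomputable def eb (m : ℕ) : LOne := lp.single 1 m (1 : ℝ)

lemma eb_norm (m : ℕ) : ‖eb m‖ = 1 := by
  have := lp.norm_single (p := 1) (E := fun _ : ℕ => ℝ) (by norm_num)
    m (1 : ℝ)
  unfold eb; rw [this]; simp

lemma eb_apply_self (m : ℕ) : eb m m = 1 := by
  unfold eb; exact lp.single_apply_self (E := fun _ : ℕ => ℝ) 1 m 1

lemma eb_apply_ne {m i : ℕ} (h : i ≠ m) : eb m i = 0 := by
  unfold eb; exact lp.single_apply_ne (E := fun _ : ℕ => ℝ) 1 m 1 h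

noncomputable def xv (a b c : ℕ) : LOne :=
  (4 : ℝ)⁻¹ • eb a + (4 : ℝ)⁻¹ • eb b + (-(2 : ℝ)⁻¹) • eb c

lemma xv_apply (a b c i : ℕ) :
    xv a b c i = (4 : ℝ)⁻¹ * eb a i + (4 : ℝ)⁻¹ * eb b i + (-(2 : ℝ)⁻¹) * eb c i := by
  simp [xv, lp.coeFn_add, lp.coeFn_smul, Pi.add_apply, Pi.neg_apply, Pi.smul_apply, smul_eq_mul]
  rfl

lemma xv_norm_le (a b c : ℕ) : ‖xv a b c‖ ≤ 1 := by
  calc ‖xv a b c‖ ≤ ‖(4 : ℝ)⁻¹ • eb a + (4 : ℝ)⁻¹ • eb b‖ + ‖(-(2 : ℝ)⁻¹) • eb c‖ :=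
        norm_add_le _ _
  _ ≤ ‖(4 : ℝ)⁻¹ • eb a‖ + ‖(4 : ℝ)⁻¹ • eb b‖ + ‖(-(2 : ℝ)⁻¹) • eb c‖ := by
      have := norm_add_le ((4 : ℝ)⁻¹ • eb a) ((4 : ℝ)⁻¹ • eb b)
      linarith
  _ ≤ 1 := by
      rw [norm_smul, norm_smul, norm_smul, eb_norm, eb_norm, eb_norm]
      norm_num

lemma xv_tsum (ξ : Linf) (k : ℕ) (hk : k ≠ 0) {a b c : ℕ} (hab : a ≠ b) (hac : a ≠ c) (hbc : b ≠ c) :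
    ∑' i, ξ i * (xv a b c i) ^ k
      = ξ a * ((4 : ℝ)⁻¹) ^ k + ξ b * ((4 : ℝ)⁻¹) ^ k + ξ c * (-(2 : ℝ)⁻¹) ^ k := by
  have hzero : ∀ i ∉ ({a, b, c} : Finset ℕ), ξ i * (xv a b c i) ^ k = 0 := by
    intro i hi
    simp only [Finset.mem_insert, Finset.mem_singleton, not_or] at hi
    rw [xv_apply, eb_apply_ne hi.1, eb_apply_ne hi.2.1, eb_apply_ne hi.2.2]
    simp [zero_pow hk]
  rw [tsum_eq_sum hzero]
  have h1 : xv a b c a = (4 : ℝ)⁻¹ := by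
    rw [xv_apply, eb_apply_self, eb_apply_ne hab, eb_apply_ne hac]; ring
  have h2 : xv a b c b = (4 : ℝ)⁻¹ := by
    rw [xv_apply, eb_apply_self, eb_apply_ne (Ne.symm hab), eb_apply_ne hbc]; ring
  have h3 : xv a b c c = -(2 : ℝ)⁻¹ := by
    rw [xv_apply, eb_apply_self, eb_apply_ne (Ne.symm hac), eb_apply_ne (Ne.symm hbc)]; ring
  rw [Finset.sum_insert (by simp [hab, hac]), Finset.sum_insert (by simp [hbc]),
    Finset.sum_singleton, h1, h2, h3]
  ring

lemma key_est (k : ℕ) (hk : 2 ≤ k) (ε η s ta tb tc : ℝ) (hε : 0 < ε) (hs : ε ≤ |s|)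
    (hta : |ta - s| ≤ η) (htb : |tb - s| ≤ η) (htc : |tc - s| ≤ η)
    (hη : (2 + 2 ^ k) * η ≤ ε) :
    ε ≤ |ta + tb + (-2 : ℝ) ^ k * tc| := by
  have hη0 : 0 ≤ η := le_trans (abs_nonneg _) hta
  set M : ℝ := 2 + (-2 : ℝ) ^ k with hM
  have hMabs : (6 : ℝ) ≤ |M| := by
    rcases Nat.even_or_odd k with he | ho
    · have : (-2 : ℝ) ^ k = 2 ^ k := he.neg_pow 2
      have h4 : (4 : ℝ) ≤ 2 ^ k := by
        calc (4 : ℝ) = 2 ^ 2 := by norm_num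
        _ ≤ 2 ^ k := pow_le_pow_right₀ (by norm_num) hk
      rw [hM, this, abs_of_pos (by linarith)]
      linarith
    · have hk3 : 3 ≤ k := by
        by_contra h
        push_neg at h
        have hk2 : k = 2 := by omega
        subst hk2
        simp [Nat.odd_iff] at ho
      have : (-2 : ℝ) ^ k = -(2 ^ k) := ho.neg_pow 2
      have h8 : (8 : ℝ) ≤ 2 ^ k := by
        calc (8 : ℝ) = 2 ^ 3 := by norm_num
        _ ≤ 2 ^ k := pow_le_pow_right₀ (by norm_num) hk3
      rw [hM, this, abs_of_nonpos (by linarith)]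
      linarith
  set rest : ℝ := (ta - s) + (tb - s) + (-2 : ℝ) ^ k * (tc - s) with hrest
  have hkey : ta + tb + (-2 : ℝ) ^ k * tc = s * M + rest := by rw [hM, hrest]; ring
  have habs2 : |(-2 : ℝ) ^ k| = 2 ^ k := by
    rw [abs_pow]; norm_num
  have hrestle : |rest| ≤ (2 + 2 ^ k) * η := by
    calc |rest| ≤ |ta - s| + |tb - s| + |(-2 : ℝ) ^ k * (tc - s)| := by
          rw [hrest]
          exact (abs_add_le _ _).trans (by linarith [abs_add_le (ta - s) (tb - s)])
    _ ≤ η + η + 2 ^ k * η := by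
        rw [abs_mul, habs2]
        have : (2 : ℝ) ^ k * |tc - s| ≤ 2 ^ k * η :=
          mul_le_mul_of_nonneg_left htc (by positivity)
        linarith
    _ = (2 + 2 ^ k) * η := by ring
  have hsM : ε * 6 ≤ |s * M| := by
    rw [abs_mul]
    exact mul_le_mul hs hMabs (by norm_num) (abs_nonneg _)
  have htri : |s * M| ≤ |ta + tb + (-2 : ℝ) ^ k * tc| + |rest| := by
    have : s * M = (ta + tb + (-2 : ℝ) ^ k * tc) - rest := by rw [hkey]; ring
    rw [this]
    exact abs_sub _ _
  linarith

set_option maxHeartbeats 1000000 in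
lemma weak_nhds_mem {V : Set (WeakSpace ℝ LOne)} (hV : V ∈ nhds (toWeakSpace ℝ LOne 0)) :
    ∃ If : Finset (LOne →L[ℝ] ℝ), ∃ ε₀ : ℝ, 0 < ε₀ ∧
      ∀ x : LOne, (∀ φ ∈ If, |φ x| < ε₀) → toWeakSpace ℝ LOne x ∈ V := by
  classical
  have hVc : V ∈ Filter.comap
      (fun (x : WeakSpace ℝ LOne) (φ : LOne →L[ℝ] ℝ) => (topDualPairing ℝ LOne).flip x φ)
      (nhds (fun φ : LOne →L[ℝ] ℝ => (topDualPairing ℝ LOne).flip (toWeakSpace ℝ LOne 0) φ)) := by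
    rw [← nhds_induced]
    exact hV
  obtain ⟨U, hU, hUV⟩ := Filter.mem_comap.mp hVc
  rw [nhds_pi] at hU
  obtain ⟨If, t, ht, htU⟩ := Filter.mem_pi'.mp hU
  have ht0 : ∀ φ : LOne →L[ℝ] ℝ, t φ ∈ nhds (0 : ℝ) := by
    intro φ
    convert ht φ using 2
    exact (map_zero φ).symm
  choose r hr hrb using fun φ => Metric.mem_nhds_iff.mp (ht0 φ)
  set Jf : Finset (LOne →L[ℝ] ℝ) := insert 0 If with hJf
  have hJne : Jf.Nonempty := ⟨0, Finset.mem_insert_self _ _⟩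
  refine ⟨If, Jf.inf' hJne r, (Finset.lt_inf'_iff hJne).mpr fun φ _ => hr φ, ?_⟩
  intro x hx
  apply hUV
  apply htU
  intro φ hφ
  simp only [Set.mem_preimage]
  apply hrb φ
  rw [Metric.mem_ball, dist_zero_right, Real.norm_eq_abs]
  have : (topDualPairing ℝ LOne).flip (toWeakSpace ℝ LOne x) φ = φ x := rfl
  rw [this]
  exact lt_of_lt_of_le (hx φ hφ) (Finset.inf'_le r (Finset.mem_insert_of_mem hφ))

set_option maxHeartbeats 2000000 in
lemma forward {F : Type*} [NormedAddCommGroup F] [NormedSpace ℝ F]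
    (v : F) (hv : ‖v‖ = 1) (j : ℕ) (ξ : Linf)
    (hw : WeakContOnBounded LOne F fun x => (∑' i, ξ i * (x i) ^ (j + 2)) • v) :
    Tendsto (fun i => ξ i) atTop (nhds (0 : ℝ)) := by
  classical
  by_contra hnot
  rw [Metric.tendsto_atTop] at hnot
  push_neg at hnot
  obtain ⟨ε, hε, hfreq⟩ := hnot
  have hfreq' : ∀ N : ℕ, ∃ n > N, ε ≤ |ξ n| := by
    intro N
    obtain ⟨n, hn, h⟩ := hfreq (N + 1)
    refine ⟨n, by omega, ?_⟩
    rwa [dist_zero_right, Real.norm_eq_abs] at h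
  obtain ⟨u, hu, huξ⟩ := Filter.extraction_of_frequently_atTop (Filter.frequently_atTop'.mpr hfreq')
  set P : LOne → F := fun x => (∑' i, ξ i * (x i) ^ (j + 2)) • v with hP
  have hcont := hw _ (Metric.isBounded_closedBall (x := (0 : LOne)) (r := 1))
  have h0mem : toWeakSpace ℝ LOne 0 ∈ toWeakSpace ℝ LOne '' Metric.closedBall 0 1 :=
    Set.mem_image_of_mem _ (Metric.mem_closedBall_self zero_le_one)
  have hc : ContinuousWithinAt
      (fun w : WeakSpace ℝ LOne => P ((toWeakSpace ℝ LOne).symm w))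
      (toWeakSpace ℝ LOne '' Metric.closedBall 0 1) (toWeakSpace ℝ LOne 0) :=
    hcont _ h0mem
  have hP0 : P ((toWeakSpace ℝ LOne).symm (toWeakSpace ℝ LOne 0)) = 0 := by
    rw [LinearEquiv.symm_apply_apply, hP]
    have hz : ∀ i : ℕ, ξ i * ((0 : LOne) i) ^ (j + 2) = 0 := by
      intro i
      have : ((0 : LOne) : ℕ → ℝ) i = 0 := by rw [lp.coeFn_zero]; rfl
      rw [this]
      simp
    simp only [hz, tsum_zero, zero_smul]
  set δ : ℝ := ε / 4 ^ (j + 2) with hδ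
  have hδ0 : 0 < δ := by positivity
  have hball : Metric.ball (0 : F) δ ∈
      nhds (P ((toWeakSpace ℝ LOne).symm (toWeakSpace ℝ LOne 0))) := by
    rw [hP0]; exact Metric.ball_mem_nhds _ hδ0
  have hpre := hc hball
  rw [Filter.mem_map, mem_nhdsWithin] at hpre
  obtain ⟨V, hVopen, hV0, hVsub⟩ := hpre
  obtain ⟨If, ε₀, hε₀, hVin⟩ := weak_nhds_mem (hVopen.mem_nhds hV0)
  -- the bounded sequence in a finite-dimensional space
  set q : ℕ → (↥If → ℝ) × ℝ :=
    fun n => (fun φ => (φ : LOne →L[ℝ] ℝ) (eb (u n)), ξ (u n)) with hq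
  set Jf : Finset (LOne →L[ℝ] ℝ) := insert 0 If with hJf
  have hJne : Jf.Nonempty := ⟨0, Finset.mem_insert_self _ _⟩
  set C : ℝ := 1 + ‖ξ‖ + Jf.sup' hJne (fun φ => ‖φ‖) with hC
  have hsup0 : (0 : ℝ) ≤ Jf.sup' hJne (fun φ => ‖φ‖) := by
    refine le_trans (norm_nonneg (0 : LOne →L[ℝ] ℝ)) ?_
    exact Finset.le_sup' (fun φ : LOne →L[ℝ] ℝ => ‖φ‖) (Finset.mem_insert_self 0 If)
  have hC0 : (0 : ℝ) ≤ C := by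
    have := norm_nonneg ξ
    rw [hC]; linarith
  have hqC : ∀ n, q n ∈ Metric.closedBall (0 : (↥If → ℝ) × ℝ) C := by
    intro n
    rw [Metric.mem_closedBall, dist_zero_right, Prod.norm_def]
    refine max_le ?_ ?_
    · refine (pi_norm_le_iff_of_nonneg hC0).mpr fun φ => ?_
      have h1 : ‖(φ : LOne →L[ℝ] ℝ) (eb (u n))‖ ≤ ‖(φ : LOne →L[ℝ] ℝ)‖ := by
        have := (φ : LOne →L[ℝ] ℝ).le_opNorm (eb (u n))
        rwa [eb_norm, mul_one] at this
      refine h1.trans ?_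
      have h2 : ‖(φ : LOne →L[ℝ] ℝ)‖ ≤ Jf.sup' hJne (fun ψ => ‖ψ‖) :=
        Finset.le_sup' _ (Finset.mem_insert_of_mem φ.2)
      have := norm_nonneg ξ
      rw [hC]; linarith
    · have h1 : |ξ (u n)| ≤ ‖ξ‖ := linf_abs_apply_le_norm ξ (u n)
      rw [Real.norm_eq_abs]
      rw [hC]; linarith
  obtain ⟨L, _, ψ, hψ, hql⟩ := tendsto_subseq_of_bounded Metric.isBounded_closedBall hqC
  have hsε : ε ≤ |L.2| := by
    have h2 : Tendsto (fun n => (q (ψ n)).2) atTop (nhds L.2) :=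
      (continuous_snd.tendsto L).comp hql
    have h3 : Tendsto (fun n => |(q (ψ n)).2|) atTop (nhds |L.2|) :=
      (continuous_abs.tendsto _).comp h2
    exact ge_of_tendsto h3 (Filter.Eventually.of_forall fun n => huξ (ψ n))
  set η : ℝ := ε / (2 + 2 ^ (j + 2)) with hηdef
  have hη0 : 0 < η := by positivity
  set η' : ℝ := min η (ε₀ / 8) with hη'def
  have hη'0 : 0 < η' := lt_min hη0 (by positivity)
  obtain ⟨N, hN⟩ := (Metric.tendsto_atTop.mp hql) η' hη'0
  have hd : ∀ n, N ≤ n →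
      (∀ φ : ↥If, |(φ : LOne →L[ℝ] ℝ) (eb (u (ψ n))) - L.1 φ| < η') ∧
        |ξ (u (ψ n)) - L.2| < η' := by
    intro n hn
    have h := hN n hn
    rw [Prod.dist_eq, max_lt_iff] at h
    refine ⟨fun φ => ?_, ?_⟩
    · have := (dist_le_pi_dist (q (ψ n)).1 L.1 φ).trans_lt h.1
      rwa [Real.dist_eq] at this
    · have := h.2
      rwa [Real.dist_eq] at this
  set a := u (ψ N) with ha
  set b := u (ψ (N + 1)) with hb
  set c := u (ψ (N + 2)) with hc2
  have hab : a < b := hu (hψ (by omega))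
  have hbc : b < c := hu (hψ (by omega))
  have hac : a < c := hab.trans hbc
  set x : LOne := xv a b c with hx
  -- x is in the closed unit ball
  have hxball : x ∈ Metric.closedBall (0 : LOne) 1 := by
    rw [Metric.mem_closedBall, dist_zero_right]
    exact xv_norm_le a b c
  -- x is in V
  have hxV : toWeakSpace ℝ LOne x ∈ V := by
    refine hVin x fun φ hφ => ?_
    have hphix : φ x = (4 : ℝ)⁻¹ * φ (eb a) + (4 : ℝ)⁻¹ * φ (eb b)
        + (-(2 : ℝ)⁻¹) * φ (eb c) := by
      rw [hx]
      unfold xv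
      rw [map_add, map_add, map_smul, map_smul, map_smul]
      simp [smul_eq_mul]
    set p : ℝ := L.1 ⟨φ, hφ⟩ with hp
    have hda := ((hd N le_rfl).1 ⟨φ, hφ⟩)
    have hdb := ((hd (N + 1) (by omega)).1 ⟨φ, hφ⟩)
    have hdc := ((hd (N + 2) (by omega)).1 ⟨φ, hφ⟩)
    have hrw : φ x = (4 : ℝ)⁻¹ * (φ (eb a) - p) + (4 : ℝ)⁻¹ * (φ (eb b) - p)
        + (-(2 : ℝ)⁻¹) * (φ (eb c) - p) := by
      rw [hphix]; ring
    have habs : |φ x| ≤ (4 : ℝ)⁻¹ * |φ (eb a) - p| + (4 : ℝ)⁻¹ * |φ (eb b) - p|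
        + (2 : ℝ)⁻¹ * |φ (eb c) - p| := by
      rw [hrw]
      refine (abs_add_le _ _).trans ?_
      have h1 := abs_add_le ((4 : ℝ)⁻¹ * (φ (eb a) - p)) ((4 : ℝ)⁻¹ * (φ (eb b) - p))
      have e1 : |(4 : ℝ)⁻¹ * (φ (eb a) - p)| = (4 : ℝ)⁻¹ * |φ (eb a) - p| := by
        rw [abs_mul]; norm_num
      have e2 : |(4 : ℝ)⁻¹ * (φ (eb b) - p)| = (4 : ℝ)⁻¹ * |φ (eb b) - p| := by
        rw [abs_mul]; norm_num
      have e3 : |(-(2 : ℝ)⁻¹) * (φ (eb c) - p)| = (2 : ℝ)⁻¹ * |φ (eb c) - p| := by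
        rw [abs_mul]; norm_num
      rw [e3]
      rw [e1, e2] at h1
      linarith
    have hη'ε₀ : η' ≤ ε₀ / 8 := min_le_right _ _
    calc |φ x| ≤ (4 : ℝ)⁻¹ * |φ (eb a) - p| + (4 : ℝ)⁻¹ * |φ (eb b) - p|
        + (2 : ℝ)⁻¹ * |φ (eb c) - p| := habs
    _ < (4 : ℝ)⁻¹ * η' + (4 : ℝ)⁻¹ * η' + (2 : ℝ)⁻¹ * η' := by
        have g1 : (4 : ℝ)⁻¹ * |φ (eb a) - p| < (4 : ℝ)⁻¹ * η' :=
          mul_lt_mul_of_pos_left hda (by norm_num)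
        have g2 : (4 : ℝ)⁻¹ * |φ (eb b) - p| < (4 : ℝ)⁻¹ * η' :=
          mul_lt_mul_of_pos_left hdb (by norm_num)
        have g3 : (2 : ℝ)⁻¹ * |φ (eb c) - p| < (2 : ℝ)⁻¹ * η' :=
          mul_lt_mul_of_pos_left hdc (by norm_num)
        linarith
    _ = η' := by ring
    _ < ε₀ := by
        have := hη'ε₀
        linarith
  -- conclusion: contradiction on |g x|
  have hPx : ‖P x‖ < δ := by
    have := hVsub ⟨hxV, Set.mem_image_of_mem _ hxball⟩
    simp only [Set.mem_preimage, LinearEquiv.symm_apply_apply] at this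
    rwa [Metric.mem_ball, dist_zero_right] at this
  have hgx : ∑' i, ξ i * (x i) ^ (j + 2)
      = ξ a * ((4 : ℝ)⁻¹) ^ (j + 2) + ξ b * ((4 : ℝ)⁻¹) ^ (j + 2)
        + ξ c * (-(2 : ℝ)⁻¹) ^ (j + 2) :=
    xv_tsum ξ (j + 2) (by omega) hab.ne hac.ne hbc.ne
  have e1 : (4 : ℝ) ^ (j + 2) * (4 : ℝ)⁻¹ ^ (j + 2) = 1 := by
    rw [← mul_pow]; norm_num
  have e2 : (4 : ℝ) ^ (j + 2) * (-(2 : ℝ)⁻¹) ^ (j + 2) = (-2 : ℝ) ^ (j + 2) := by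
    rw [← mul_pow]; norm_num
  have hgx4 : (4 : ℝ) ^ (j + 2) * ∑' i, ξ i * (x i) ^ (j + 2)
      = ξ a + ξ b + (-2 : ℝ) ^ (j + 2) * ξ c := by
    rw [hgx]
    linear_combination (ξ a) * e1 + (ξ b) * e1 + (ξ c) * e2
  have hkey : ε ≤ |ξ a + ξ b + (-2 : ℝ) ^ (j + 2) * ξ c| := by
    refine key_est (j + 2) (by omega) ε η L.2 (ξ a) (ξ b) (ξ c) hε hsε
      ?_ ?_ ?_ ?_
    · exact ((hd N le_rfl).2).le.trans (min_le_left _ _)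
    · exact ((hd (N + 1) (by omega)).2).le.trans (min_le_left _ _)
    · exact ((hd (N + 2) (by omega)).2).le.trans (min_le_left _ _)
    · rw [hηdef]
      rw [mul_div_cancel₀]
      positivity
  have hlow : δ ≤ |∑' i, ξ i * (x i) ^ (j + 2)| := by
    rw [hδ, div_le_iff₀ (by positivity)]
    calc ε ≤ |ξ a + ξ b + (-2 : ℝ) ^ (j + 2) * ξ c| := hkey
    _ = |(4 : ℝ) ^ (j + 2) * ∑' i, ξ i * (x i) ^ (j + 2)| := by rw [hgx4]
    _ = |∑' i, ξ i * (x i) ^ (j + 2)| * 4 ^ (j + 2) := by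
        rw [abs_mul, abs_of_pos (by positivity : (0:ℝ) < (4:ℝ) ^ (j + 2))]
        ring
  have hnorm : ‖P x‖ = |∑' i, ξ i * (x i) ^ (j + 2)| := by
    rw [hP]
    simp only [norm_smul, hv, mul_one, Real.norm_eq_abs]
  rw [hnorm] at hPx
  linarith

theorem stmt8 (F : Type*) [NormedAddCommGroup F] [NormedSpace ℝ F] [CompleteSpace F]
    (v : F) (hv : ‖v‖ = 1) (j : ℕ) (ξ : Linf)
    (f : BoundedContinuousFunction (Ball LOne) F) (hf : f ∈ polySet (j + 2) LOne F)
    (hval : ∀ y : Ball LOne, f y = (∑' i : ℕ, ξ i * ((y : LOne) i) ^ (j + 2)) • v) :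
    f ∈ polyWbSet (j + 2) LOne F ↔ Tendsto (fun i => ξ i) atTop (nhds (0 : ℝ)) := by
  constructor
  · rintro ⟨A, hA, hAw⟩
    have hPeq : (fun x : LOne => A fun _ => x)
        = fun x => (∑' i, ξ i * (x i) ^ (j + 2)) • v :=
      funext fun x => P_eq v j ξ f hval A hA x
    rw [hPeq] at hAw
    exact forward v hv j ξ hAw
  · intro hξ
    obtain ⟨A, hA⟩ := hf
    refine ⟨A, hA, ?_⟩
    have hPeq : (fun x : LOne => A fun _ => x)
        = fun x => (∑' i, ξ i * (x i) ^ (j + 2)) • v :=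
      funext fun x => P_eq v j ξ f hval A hA x
    rw [hPeq]
    exact wcb_of_tendsto v hv j ξ hξ

end Stmts
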